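/- arXiv:2301.03638 — 2 statements merged into one kernel-verified Lean document; each statement's English description precedes it below -/
import Mathlib

section
/- Let γ > 1, j an integer, and d ∈ [1, γ). If U is uniformly distributed on [0,1) and b = γ^U, then E[2bγ^j·(γ/(γ-1))·1_{U ≥ log_γ d} + 2bγ^{j+1}·(γ/(γ-1))·1_{U < log_γ d}] = 2dγ^j·(γ/ln γ). -/
open Real in
lemma int_rpow_aux (γ : ℝ) (hγ : 1 < γ) (a b : ℝ) :
    ∫ u in a..b, γ ^ u = (γ ^ b - γ ^ a) / Real.log γ := by
  have hγ0 : (0:ℝ) < γ := lt_trans one_pos hγ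
  have hlog : Real.log γ ≠ 0 := ne_of_gt (Real.log_pos hγ)
  have hder : ∀ x ∈ Set.uIcc a b,
      HasDerivAt (fun u => γ ^ u / Real.log γ) (γ ^ x) x := by
    intro x _
    have h := (Real.hasStrictDerivAt_const_rpow hγ0 x).hasDerivAt.div_const (Real.log γ)
    simpa [mul_div_assoc, mul_div_cancel_right₀ _ hlog] using h
  have hcγ : Continuous fun u : ℝ => γ ^ u :=
    continuous_iff_continuousAt.mpr fun x => Real.continuousAt_const_rpow (ne_of_gt hγ0)
  have hcont : IntervalIntegrable (fun u => γ ^ u) MeasureTheory.volume a b :=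
    hcγ.intervalIntegrable a b
  have := intervalIntegral.integral_eq_sub_of_hasDerivAt hder hcont
  rw [this]
  ring

open Classical in
theorem stmt_1 (γ d : ℝ) (j : ℤ) (hγ : 1 < γ) (hd : 1 ≤ d) (hd' : d < γ) :
    ∫ u in (0:ℝ)..1,
        (if Real.log d / Real.log γ ≤ u
          then 2 * γ ^ u * γ ^ j * (γ / (γ - 1))
          else 2 * γ ^ u * γ ^ (j + 1) * (γ / (γ - 1)))
      = 2 * d * γ ^ j * (γ / Real.log γ) := by
  have hγ0 : (0:ℝ) < γ := lt_trans one_pos hγ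
  have hd0 : (0:ℝ) < d := lt_of_lt_of_le one_pos hd
  have hlogγ : 0 < Real.log γ := Real.log_pos hγ
  set c : ℝ := Real.log d / Real.log γ with hc
  have hγc : γ ^ c = d := Real.rpow_logb hγ0 (ne_of_gt hγ) hd0
  have hc0 : 0 ≤ c := div_nonneg (Real.log_nonneg hd) hlogγ.le
  have hc1 : c < 1 := by
    rw [div_lt_one hlogγ]
    exact Real.log_lt_log hd0 hd'
  set A : ℝ → ℝ := fun u => 2 * γ ^ u * γ ^ j * (γ / (γ - 1)) with hA
  set B : ℝ → ℝ := fun u => 2 * γ ^ u * γ ^ (j + 1) * (γ / (γ - 1)) with hB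
  set f : ℝ → ℝ := fun u => if c ≤ u then A u else B u with hf
  have hcγ : Continuous fun u : ℝ => γ ^ u :=
    continuous_iff_continuousAt.mpr fun x => Real.continuousAt_const_rpow (ne_of_gt hγ0)
  have hcontA : Continuous A :=
    Continuous.mul (Continuous.mul (Continuous.mul continuous_const hcγ) continuous_const)
      continuous_const
  have hcontB : Continuous B :=
    Continuous.mul (Continuous.mul (Continuous.mul continuous_const hcγ) continuous_const)
      continuous_const
  have hnec : ∀ᵐ x : ℝ ∂MeasureTheory.volume, x ≠ c := by
    refine MeasureTheory.ae_iff.mpr ?_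
    have : {x : ℝ | ¬ x ≠ c} = {c} := by ext x; simp
    rw [this]
    exact Real.volume_singleton
  have haeB : ∀ᵐ x : ℝ ∂MeasureTheory.volume, x ∈ Set.uIoc (0:ℝ) c → f x = B x := by
    filter_upwards [hnec] with x hx hmem
    rw [Set.uIoc_of_le hc0] at hmem
    have : ¬ c ≤ x := by
      intro h
      exact hx (le_antisymm hmem.2 h)
    simp [hf, this]
  have haeA : ∀ᵐ x : ℝ ∂MeasureTheory.volume, x ∈ Set.uIoc c (1:ℝ) → f x = A x := by
    filter_upwards with x hmem
    rw [Set.uIoc_of_le hc1.le] at hmem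
    simp [hf, hmem.1.le]
  have hint1 : IntervalIntegrable f MeasureTheory.volume 0 c :=
    (hcontB.intervalIntegrable 0 c).congr_ae
      (((MeasureTheory.ae_restrict_iff' measurableSet_uIoc).mpr haeB).mono fun x h => h.symm)
  have hint2 : IntervalIntegrable f MeasureTheory.volume c 1 :=
    (hcontA.intervalIntegrable c 1).congr_ae
      (((MeasureTheory.ae_restrict_iff' measurableSet_uIoc).mpr haeA).mono fun x h => h.symm)
  have hsplit : ∫ u in (0:ℝ)..1, f u = (∫ u in (0:ℝ)..c, f u) + ∫ u in c..(1:ℝ), f u :=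
    (intervalIntegral.integral_add_adjacent_intervals hint1 hint2).symm
  have heq1 : ∫ u in (0:ℝ)..c, f u = ∫ u in (0:ℝ)..c, B u :=
    intervalIntegral.integral_congr_ae haeB
  have heq2 : ∫ u in c..(1:ℝ), f u = ∫ u in c..(1:ℝ), A u :=
    intervalIntegral.integral_congr_ae haeA
  have hB' : ∫ u in (0:ℝ)..c, B u
      = 2 * γ ^ (j+1) * (γ / (γ - 1)) * ((γ ^ c - γ ^ (0:ℝ)) / Real.log γ) := by
    rw [← int_rpow_aux γ hγ 0 c, ← intervalIntegral.integral_const_mul]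
    apply intervalIntegral.integral_congr
    intro x _
    simp [hB]; ring
  have hA' : ∫ u in c..(1:ℝ), A u
      = 2 * γ ^ j * (γ / (γ - 1)) * ((γ ^ (1:ℝ) - γ ^ c) / Real.log γ) := by
    rw [← int_rpow_aux γ hγ c 1, ← intervalIntegral.integral_const_mul]
    apply intervalIntegral.integral_congr
    intro x _
    simp [hA]; ring
  have hzpow : γ ^ (j + 1) = γ ^ j * γ := by
    rw [zpow_add₀ (ne_of_gt hγ0)]; simp
  have h1 : γ ^ (1:ℝ) = γ := Real.rpow_one γ
  have h0 : γ ^ (0:ℝ) = 1 := Real.rpow_zero γ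
  show (∫ u in (0:ℝ)..1, f u) = 2 * d * γ ^ j * (γ / Real.log γ)
  rw [hsplit, heq1, heq2, hB', hA', hγc, hzpow, h1, h0]
  have hγ1 : γ - 1 ≠ 0 := sub_ne_zero.mpr (ne_of_gt hγ)
  field_simp
  ring
end

section
/- Let G = (V,E) be a connected graph with root r and nonnegative integer vertex weights w_v, total weight W. For each q ∈ [0,W], let λ*(q) be the minimum total edge length of a subtree of G containing r whose vertices have total weight at least q. Then λ* : [0,W] → ℝ≥0 is a nondecreasing piecewise-constant function, and for any expanding search pattern σ, the weighted total latency L(σ) = ∑_v w_v L_v(σ) satisfies L(σ) ≥ ∫_0^W λ*(q) dq. -/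
open Classical

noncomputable section

/-- Vertices explored after the first `i` edges of the pattern `σ`, starting at root `r`. -/
def explored {V : Type*} (r : V) (σ : List (Sym2 V)) (i : ℕ) : Set V :=
  insert r {v | ∃ e ∈ σ.take i, v ∈ e}

/-- An expanding search pattern from root `r`: a sequence of edges of `G`, each connecting
an already explored vertex to an unexplored one. -/
def IsExpandingSearch {V : Type*} (G : SimpleGraph V) (r : V) (σ : List (Sym2 V)) : Prop :=
  ∀ i : ℕ, ∀ h : i < σ.length,
    σ.get ⟨i, h⟩ ∈ G.edgeSet ∧
    ∃ u v : V, σ.get ⟨i, h⟩ = s(u, v) ∧ u ∈ explored r σ i ∧ v ∉ explored r σ i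

/-- The latency `L_v(σ)`: the sum of the lengths of the first `k` edges, where the `k`-th
edge is the first one containing `v` (and `L_r = 0`). -/
def latency {V : Type*} (r : V) (ℓ : Sym2 V → ℝ) (σ : List (Sym2 V)) (v : V) : ℝ :=
  if v = r then 0
  else ∑ i ∈ Finset.range (sInf {i | v ∈ σ.getD i s(r, r)} + 1), ℓ (σ.getD i s(r, r))

/-- `λ*(q)`: the minimum total edge length of a subtree of `G` containing the root `r`
whose vertices have total weight at least `q`. -/
def steinerCost {V : Type*} [Fintype V] (G : SimpleGraph V) (ℓ : Sym2 V → ℝ)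
    (w : V → ℕ) (r : V) (q : ℝ) : ℝ :=
  sInf {x | ∃ H : G.Subgraph, r ∈ H.verts ∧ H.coe.Connected ∧ H.coe.IsAcyclic ∧
    q ≤ ∑ v ∈ H.verts.toFinite.toFinset, (w v : ℝ) ∧
    x = ∑ e ∈ H.edgeSet.toFinite.toFinset, ℓ e}

section MyAux

variable {V : Type*} {G : SimpleGraph V} {r : V} {σ : List (Sym2 V)} {w : V → ℕ} {ℓ : Sym2 V → ℝ}


variable {V : Type*} {G : SimpleGraph V} {r : V} {σ : List (Sym2 V)}

lemma mem_explored_of_mem_take {i : ℕ} {e : Sym2 V} (he : e ∈ σ.take i) {x : V} (hx : x ∈ e) :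
    x ∈ explored r σ i :=
  Set.mem_insert_iff.2 (Or.inr ⟨e, he, hx⟩)

lemma explored_zero : explored r σ 0 = {r} := by
  ext x; simp [explored]

lemma explored_mono {i j : ℕ} (h : i ≤ j) : explored r σ i ⊆ explored r σ j := by
  intro x hx
  rcases Set.mem_insert_iff.1 hx with rfl | ⟨e, he, hxe⟩
  · exact Set.mem_insert _ _
  · refine Set.mem_insert_iff.2 (Or.inr ⟨e, ?_, hxe⟩)
    have hpre : σ.take i <+: σ.take j := by
      rw [show σ.take i = (σ.take j).take i from by rw [List.take_take, min_eq_left h]]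
      exact List.take_prefix _ _
    exact hpre.subset he

lemma take_succ_eq {i : ℕ} (hi : i < σ.length) :
    σ.take (i + 1) = σ.take i ++ [σ.get ⟨i, hi⟩] := by
  rw [List.take_succ]
  simp [List.getElem?_eq_getElem hi]

lemma step_data (hσ : IsExpandingSearch G r σ) {i : ℕ} (hi : i < σ.length) :
    ∃ u v : V, σ.get ⟨i, hi⟩ = s(u, v) ∧ G.Adj u v ∧ u ∈ explored r σ i ∧
      v ∉ explored r σ i ∧ explored r σ (i + 1) = insert v (explored r σ i) := by
  obtain ⟨hedge, u, v, heq, hu, hv⟩ := hσ i hi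
  refine ⟨u, v, heq, ?_, hu, hv, ?_⟩
  · rw [heq] at hedge; exact hedge
  · have htake : σ.take (i + 1) = σ.take i ++ [s(u, v)] := by
      rw [take_succ_eq hi, heq]
    ext x
    simp only [explored, htake, List.mem_append, List.mem_singleton, Set.mem_insert_iff,
      Set.mem_setOf_eq]
    constructor
    · rintro (rfl | ⟨e, (he | rfl), hxe⟩)
      · exact Or.inr (Or.inl rfl)
      · exact Or.inr (Or.inr ⟨e, he, hxe⟩)
      · rcases Sym2.mem_iff.1 hxe with rfl | rfl
        · rcases Set.mem_insert_iff.1 hu with rfl | hu'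
          · exact Or.inr (Or.inl rfl)
          · exact Or.inr (Or.inr hu')
        · exact Or.inl rfl
    · rintro (rfl | rfl | ⟨e, he, hxe⟩)
      · exact Or.inr ⟨s(u, x), Or.inr rfl, Sym2.mem_mk_right _ _⟩
      · exact Or.inl rfl
      · exact Or.inr ⟨e, Or.inl he, hxe⟩

lemma nodup_take (hσ : IsExpandingSearch G r σ) : ∀ i : ℕ, (σ.take i).Nodup := by
  intro i
  induction i with
  | zero => simp
  | succ i ih =>
    by_cases hi : i < σ.length
    · obtain ⟨u, v, heq, _, hu, hv, _⟩ := step_data hσ hi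
      rw [take_succ_eq hi]
      refine List.Nodup.append ih (List.nodup_singleton _) ?_
      intro e he he'
      rw [List.mem_singleton] at he'
      subst he'
      exact hv (mem_explored_of_mem_take he (by rw [heq]; exact Sym2.mem_mk_right u v))
    · rw [List.take_of_length_le (by omega)]
      rw [List.take_of_length_le (by omega)] at ih
      exact ih

lemma acyclic_fromTake (hσ : IsExpandingSearch G r σ) :
    ∀ i : ℕ, (SimpleGraph.fromEdgeSet {e : Sym2 V | e ∈ σ.take i}).IsAcyclic := by
  intro i
  induction i with
  | zero =>
    have h0 : {e : Sym2 V | e ∈ σ.take 0} = ∅ := by ext e; simp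
    rw [h0, SimpleGraph.fromEdgeSet_empty]
    exact SimpleGraph.isAcyclic_bot
  | succ i ih =>
    by_cases hi : i < σ.length
    · obtain ⟨u, v, heq, hadj, hu, hv, _⟩ := step_data hσ hi
      have htake : σ.take (i + 1) = σ.take i ++ [s(u, v)] := by
        rw [take_succ_eq hi, heq]
      set T := SimpleGraph.fromEdgeSet {e : Sym2 V | e ∈ σ.take (i + 1)} with hT
      have hnbr : ∀ z : V, T.Adj v z → z = u := by
        intro z hz
        rw [hT, SimpleGraph.fromEdgeSet_adj] at hz
        obtain ⟨hmem, hne⟩ := hz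
        rw [Set.mem_setOf_eq, htake, List.mem_append, List.mem_singleton] at hmem
        rcases hmem with hmem | hmem
        · exact absurd (mem_explored_of_mem_take hmem (Sym2.mem_mk_left v z)) hv
        · rw [Sym2.eq_iff] at hmem
          rcases hmem with ⟨rfl, rfl⟩ | ⟨_, rfl⟩
          · exact absurd hu hv
          · rfl
      intro a c hc
      by_cases hvs : v ∈ c.support
      · obtain ⟨d, hd⟩ : ∃ d : T.Walk v v, d.IsCycle := ⟨c.rotate v hvs, hc.rotate hvs⟩
        cases d with
        | nil => exact hd.ne_nil rfl
        | cons h p =>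
          rename_i x
          have hx : u = x := (hnbr _ h).symm
          subst hx
          have hvu : v ≠ u := fun h' => hv (h' ▸ hu)
          obtain ⟨y, h', p', hp'⟩ := SimpleGraph.Walk.exists_eq_cons_of_ne hvu p.reverse
          have hy : u = y := (hnbr _ h').symm
          subst hy
          have hmem : s(v, u) ∈ p.edges := by
            have : s(v, u) ∈ p.reverse.edges := by
              rw [hp', SimpleGraph.Walk.edges_cons]
              exact List.mem_cons_self
            rwa [SimpleGraph.Walk.edges_reverse, List.mem_reverse] at this
          have hnodup := hd.edges_nodup
          rw [SimpleGraph.Walk.edges_cons] at hnodup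
          exact (List.nodup_cons.1 hnodup).1 hmem
      · have hsub : ∀ e ∈ c.edges,
            e ∈ (SimpleGraph.fromEdgeSet {e : Sym2 V | e ∈ σ.take i}).edgeSet := by
          intro e he
          have he2 := c.edges_subset_edgeSet he
          rw [hT, SimpleGraph.edgeSet_fromEdgeSet] at he2
          obtain ⟨hmem, hdiag⟩ := he2
          rw [SimpleGraph.edgeSet_fromEdgeSet]
          refine ⟨?_, hdiag⟩
          rw [Set.mem_setOf_eq, htake, List.mem_append, List.mem_singleton] at hmem
          rcases hmem with hmem | rfl
          · exact hmem
          · exact absurd (SimpleGraph.Walk.snd_mem_support_of_mem_edges c he) hvs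
        exact ih (c.transfer _ hsub) (hc.transfer hsub)
    · have : σ.take (i + 1) = σ.take i := by
        rw [List.take_of_length_le (by omega), List.take_of_length_le (by omega)]
      rw [this]
      exact ih

lemma coe_acyclic_of_subset (H : G.Subgraph) (s : Set (Sym2 V))
    (hE : H.edgeSet ⊆ s) (hs : (SimpleGraph.fromEdgeSet s).IsAcyclic) : H.coe.IsAcyclic := by
  intro a c hc
  let f : H.coe →g SimpleGraph.fromEdgeSet s :=
    ⟨Subtype.val, by
      intro a b hab
      rw [SimpleGraph.fromEdgeSet_adj]
      have hab' : H.Adj a.val b.val := hab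
      exact ⟨hE (SimpleGraph.Subgraph.mem_edgeSet.2 hab'), (H.adj_sub hab').ne⟩⟩
  exact hs (c.map f) (hc.map Subtype.val_injective)

lemma exists_good_subgraph (hσ : IsExpandingSearch G r σ) :
    ∀ i : ℕ, i ≤ σ.length → ∃ H : G.Subgraph, H.verts = explored r σ i ∧
      H.edgeSet = {e : Sym2 V | e ∈ σ.take i} ∧ H.Connected := by
  intro i
  induction i with
  | zero =>
    intro _
    refine ⟨G.singletonSubgraph r, ?_, ?_, SimpleGraph.Subgraph.singletonSubgraph_connected⟩
    · rw [SimpleGraph.singletonSubgraph_verts, explored_zero]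
    · rw [SimpleGraph.edgeSet_singletonSubgraph]; ext e; simp
  | succ i ih =>
    intro h1
    have hi : i < σ.length := h1
    obtain ⟨H, hV, hE, hC⟩ := ih (le_of_lt hi)
    obtain ⟨u, v, heq, hadj, hu, hv, hEx⟩ := step_data hσ hi
    have htake : σ.take (i + 1) = σ.take i ++ [s(u, v)] := by rw [take_succ_eq hi, heq]
    refine ⟨H ⊔ G.subgraphOfAdj hadj, ?_, ?_, ?_⟩
    · rw [SimpleGraph.Subgraph.verts_sup, hV, SimpleGraph.subgraphOfAdj_verts, hEx]
      ext x
      simp only [Set.mem_union, Set.mem_insert_iff, Set.mem_singleton_iff]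
      constructor
      · rintro (hx | rfl | rfl)
        · exact Or.inr hx
        · exact Or.inr hu
        · exact Or.inl rfl
      · rintro (rfl | hx)
        · tauto
        · tauto

    · rw [SimpleGraph.Subgraph.edgeSet_sup, hE, SimpleGraph.edgeSet_subgraphOfAdj, htake]
      ext e
      simp only [Set.mem_union, Set.mem_setOf_eq, List.mem_append, List.mem_singleton,
        Set.mem_singleton_iff]
    · refine SimpleGraph.Subgraph.connected_sup hC.preconnected
        (SimpleGraph.Subgraph.subgraphOfAdj_connected hadj).preconnected ?_
      refine ⟨u, ?_⟩
      rw [SimpleGraph.Subgraph.verts_inf]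
      exact ⟨hV ▸ hu, by simp⟩




variable {V : Type*} {G : SimpleGraph V} {r : V} {σ : List (Sym2 V)} {w : V → ℕ} {ℓ : Sym2 V → ℝ}

/-- weight of explored set -/
def Wg [Fintype V] (w : V → ℕ) (r : V) (σ : List (Sym2 V)) (i : ℕ) : ℝ :=
  ∑ v ∈ (explored r σ i).toFinite.toFinset, (w v : ℝ)

/-- cost of first i edges -/
def Lcost (ℓ : Sym2 V → ℝ) (r : V) (σ : List (Sym2 V)) (i : ℕ) : ℝ :=
  ∑ j ∈ Finset.range i, ℓ (σ.getD j s(r, r))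

lemma Wg_nonneg [Fintype V] (i : ℕ) : 0 ≤ Wg w r σ i :=
  Finset.sum_nonneg fun v _ => Nat.cast_nonneg _

lemma Wg_mono [Fintype V] {i j : ℕ} (h : i ≤ j) : Wg w r σ i ≤ Wg w r σ j :=
  Finset.sum_le_sum_of_subset_of_nonneg
    (Set.Finite.toFinset_subset_toFinset.mpr (explored_mono h))
    (fun v _ _ => Nat.cast_nonneg _)

lemma Wg_last [Fintype V] (hvisit : ∀ v : V, w v ≠ 0 → v ∈ explored r σ σ.length) :
    Wg w r σ σ.length = ∑ v : V, (w v : ℝ) := by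
  refine Finset.sum_subset (Finset.subset_univ _) fun x _ hx => ?_
  rw [Set.Finite.mem_toFinset] at hx
  have : w x = 0 := by by_contra h; exact hx (hvisit x h)
  simp [this]

lemma wlatency (hvisit : ∀ v : V, w v ≠ 0 → v ∈ explored r σ σ.length) (v : V) :
    (w v : ℝ) * latency r ℓ σ v =
      ∑ i ∈ Finset.range σ.length,
        ℓ (σ.getD i s(r, r)) * (if v ∈ explored r σ i then 0 else (w v : ℝ)) := by
  by_cases hr : v = r
  · rw [latency, if_pos hr, mul_zero]
    refine (Finset.sum_eq_zero fun i _ => ?_).symm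
    rw [if_pos (show v ∈ explored r σ i from by rw [hr]; exact Set.mem_insert _ _), mul_zero]
  by_cases hw0 : w v = 0
  · rw [hw0]
    push_cast
    rw [zero_mul]
    refine (Finset.sum_eq_zero fun i _ => ?_).symm
    by_cases hvi : v ∈ explored r σ i <;> simp [hvi, hw0]
  -- main case
  have hvm : v ∈ explored r σ σ.length := hvisit v hw0
  set k := sInf {i | v ∈ σ.getD i s(r, r)} with hk
  have hSne : {i | v ∈ σ.getD i s(r, r)}.Nonempty := by
    rcases Set.mem_insert_iff.1 hvm with hvr | ⟨e, he, hve⟩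
    · exact absurd hvr hr
    · rw [List.take_length] at he
      obtain ⟨n, hnl, hne⟩ := List.mem_iff_getElem.1 he
      exact ⟨n, by rw [Set.mem_setOf_eq, List.getD_eq_getElem _ _ hnl, hne]; exact hve⟩
  have hkS : v ∈ σ.getD k s(r, r) := Nat.sInf_mem hSne
  have hkm : k < σ.length := by
    by_contra h
    push_neg at h
    rw [List.getD_eq_default _ _ h] at hkS
    rcases Sym2.mem_iff.1 hkS with rfl | rfl <;> exact hr rfl
  have hchar : ∀ i : ℕ, v ∈ explored r σ i ↔ k < i := by
    intro i
    constructor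
    · intro hvi
      rcases Set.mem_insert_iff.1 hvi with hvr | ⟨e, he, hve⟩
      · exact absurd hvr hr
      · obtain ⟨n, hnl, hne⟩ := List.mem_iff_getElem.1 he
        have hni : n < i ∧ n < σ.length := by
          have := hnl; rw [List.length_take] at this; omega
        have hmemS : n ∈ {i | v ∈ σ.getD i s(r, r)} := by
          rw [Set.mem_setOf_eq, List.getD_eq_getElem _ _ hni.2]
          have : (σ.take i)[n] = σ[n] := List.getElem_take (xs := σ)
          rw [← this, hne]; exact hve
        have := Nat.sInf_le hmemS
        omega
    · intro hki
      refine Set.mem_insert_iff.2 (Or.inr ⟨σ.getD k s(r, r), ?_, hkS⟩)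
      have hk2 : k < (σ.take i).length := by rw [List.length_take]; omega
      rw [List.getD_eq_getElem _ _ hkm]
      rw [List.mem_iff_getElem]
      exact ⟨k, hk2, List.getElem_take (xs := σ)⟩
  rw [latency, if_neg hr, ← hk]
  have hstep : ∀ i ∈ Finset.range σ.length,
      ℓ (σ.getD i s(r, r)) * (if v ∈ explored r σ i then 0 else (w v : ℝ)) =
        if i < k + 1 then ℓ (σ.getD i s(r, r)) * (w v : ℝ) else 0 := by
    intro i _
    by_cases hik : k < i
    · rw [if_pos ((hchar i).2 hik), mul_zero, if_neg (by omega)]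
    · rw [if_neg (fun hvi => hik ((hchar i).1 hvi)), if_pos (by omega)]
  rw [Finset.sum_congr rfl hstep]
  rw [← Finset.sum_subset (Finset.range_subset_range.2 (show k + 1 ≤ σ.length by omega))
      (fun x _ hnx => if_neg (by rw [Finset.mem_range] at hnx; omega))]
  rw [Finset.sum_congr rfl (fun i hi => if_pos (Finset.mem_range.1 hi)), ← Finset.sum_mul,
    mul_comm]

lemma abel_sum (f g : ℕ → ℝ) (n : ℕ) :
    ∑ j ∈ Finset.range n, (∑ t ∈ Finset.range (j + 1), f t) * (g (j + 1) - g j) =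
      ∑ i ∈ Finset.range n, f i * (g n - g i) := by
  induction n with
  | zero => simp
  | succ n ih =>
    rw [Finset.sum_range_succ, ih,
      Finset.sum_range_succ (fun i => f i * (g (n + 1) - g i))]
    have h1 : ∑ i ∈ Finset.range n, f i * (g (n + 1) - g i) =
        ∑ i ∈ Finset.range n, (f i * (g n - g i) + f i * (g (n + 1) - g n)) :=
      Finset.sum_congr rfl fun i _ => by ring
    rw [h1, Finset.sum_add_distrib, ← Finset.sum_mul, Finset.sum_range_succ f n]
    ring


/-- the defining set of `steinerCost` -/
def SqSet [Fintype V] (G : SimpleGraph V) (ℓ : Sym2 V → ℝ) (w : V → ℕ) (r : V) (q : ℝ) :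
    Set ℝ :=
  {x | ∃ H : G.Subgraph, r ∈ H.verts ∧ H.coe.Connected ∧ H.coe.IsAcyclic ∧
    q ≤ ∑ v ∈ H.verts.toFinite.toFinset, (w v : ℝ) ∧
    x = ∑ e ∈ H.edgeSet.toFinite.toFinset, ℓ e}

lemma steinerCost_eq [Fintype V] (q : ℝ) :
    steinerCost G ℓ w r q = sInf (SqSet G ℓ w r q) := rfl

lemma bddBelow_SqSet [Fintype V] (hℓ : ∀ e, 0 ≤ ℓ e) (q : ℝ) : BddBelow (SqSet G ℓ w r q) := by
  refine ⟨0, ?_⟩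
  rintro x ⟨H, -, -, -, -, rfl⟩
  exact Finset.sum_nonneg fun e _ => hℓ e

lemma get_not_mem_take (hσ : IsExpandingSearch G r σ) {i : ℕ} (hi : i < σ.length) :
    σ.get ⟨i, hi⟩ ∉ σ.take i := by
  obtain ⟨u, v, heq, _, hu, hv, _⟩ := step_data hσ hi
  intro hmem
  exact hv (mem_explored_of_mem_take hmem (by rw [heq]; exact Sym2.mem_mk_right _ _))

lemma edge_sum_eq [Fintype V] (hσ : IsExpandingSearch G r σ) :
    ∀ i : ℕ, i ≤ σ.length →
      ∑ e ∈ ({e : Sym2 V | e ∈ σ.take i}).toFinite.toFinset, ℓ e = Lcost ℓ r σ i := by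
  intro i
  induction i with
  | zero =>
    intro _
    have h0 : ({e : Sym2 V | e ∈ σ.take 0}).toFinite.toFinset = ∅ := by
      ext e; simp only [Set.Finite.mem_toFinset, Set.mem_setOf_eq, List.take_zero,
        List.not_mem_nil, Finset.notMem_empty]
    rw [h0, Lcost]
    simp
  | succ i ih =>
    intro h1
    have hi : i < σ.length := h1
    have hfs : ({e : Sym2 V | e ∈ σ.take (i + 1)}).toFinite.toFinset =
        insert (σ.get ⟨i, hi⟩) (({e : Sym2 V | e ∈ σ.take i}).toFinite.toFinset) := by
      ext e
      simp only [Set.Finite.mem_toFinset, Set.mem_setOf_eq, Finset.mem_insert,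
        take_succ_eq hi, List.mem_append, List.mem_singleton]
      tauto
    rw [hfs, Finset.sum_insert (by
      rw [Set.Finite.mem_toFinset]; exact get_not_mem_take hσ hi), ih (le_of_lt hi)]
    rw [Lcost, Lcost, Finset.sum_range_succ]
    rw [List.getD_eq_getElem _ _ hi]
    rw [add_comm]
    rfl

lemma mem_SqSet [Fintype V] (hσ : IsExpandingSearch G r σ) {i : ℕ} (hi : i ≤ σ.length)
    {q : ℝ} (hq : q ≤ Wg w r σ i) : Lcost ℓ r σ i ∈ SqSet G ℓ w r q := by
  obtain ⟨H, hV, hE, hC⟩ := exists_good_subgraph hσ i hi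
  refine ⟨H, ?_, hC.coe, ?_, ?_, ?_⟩
  · rw [hV]; exact Set.mem_insert _ _
  · exact coe_acyclic_of_subset H _ (subset_of_eq hE) (acyclic_fromTake hσ i)
  · rw [Wg] at hq
    refine le_trans hq (le_of_eq ?_)
    congr 1
    ext x
    simp [Set.Finite.mem_toFinset, hV]
  · have hfe : H.edgeSet.toFinite.toFinset =
        ({e : Sym2 V | e ∈ σ.take i} : Set (Sym2 V)).toFinite.toFinset := by
      ext x; simp only [Set.Finite.mem_toFinset, hE]
    rw [hfe, edge_sum_eq hσ i hi]

lemma steinerCost_le [Fintype V] (hσ : IsExpandingSearch G r σ) (hℓ : ∀ e, 0 ≤ ℓ e)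
    {i : ℕ} (hi : i ≤ σ.length) {q : ℝ} (hq : q ≤ Wg w r σ i) :
    steinerCost G ℓ w r q ≤ Lcost ℓ r σ i := by
  rw [steinerCost_eq]
  exact csInf_le (bddBelow_SqSet hℓ q) (mem_SqSet hσ hi hq)

end MyAux

theorem stmt_19 {V : Type*} [Fintype V] [DecidableEq V]
    (G : SimpleGraph V) (hG : G.Connected) (r : V)
    (ℓ : Sym2 V → ℝ) (hℓ : ∀ e, 0 ≤ ℓ e) (w : V → ℕ)
    (σ : List (Sym2 V)) (hσ : IsExpandingSearch G r σ)
    (hvisit : ∀ v : V, w v ≠ 0 → v ∈ explored r σ σ.length) :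
    (∀ q ∈ Set.Icc (0:ℝ) (∑ v : V, (w v : ℝ)), 0 ≤ steinerCost G ℓ w r q) ∧
    MonotoneOn (steinerCost G ℓ w r) (Set.Icc (0:ℝ) (∑ v : V, (w v : ℝ))) ∧
    (steinerCost G ℓ w r '' Set.Icc (0:ℝ) (∑ v : V, (w v : ℝ))).Finite ∧
    (∫ q in (0:ℝ)..(∑ v : V, (w v : ℝ)), steinerCost G ℓ w r q) ≤
      ∑ v : V, (w v : ℝ) * latency r ℓ σ v := by
  have hWlast : Wg w r σ σ.length = ∑ v : V, (w v : ℝ) := Wg_last hvisit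
  have hne : ∀ q : ℝ, q ≤ ∑ v : V, (w v : ℝ) → (SqSet G ℓ w r q).Nonempty :=
    fun q hq => ⟨Lcost ℓ r σ σ.length, mem_SqSet hσ le_rfl (by rw [hWlast]; exact hq)⟩
  have hnonneg : ∀ q ∈ Set.Icc (0:ℝ) (∑ v : V, (w v : ℝ)), 0 ≤ steinerCost G ℓ w r q := by
    intro q hq
    rw [steinerCost_eq]
    refine le_csInf (hne q hq.2) ?_
    rintro x ⟨H, -, -, -, -, rfl⟩
    exact Finset.sum_nonneg fun e _ => hℓ e
  have hmono : MonotoneOn (steinerCost G ℓ w r) (Set.Icc (0:ℝ) (∑ v : V, (w v : ℝ))) := by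
    intro a ha b hb hab
    rw [steinerCost_eq, steinerCost_eq]
    refine csInf_le_csInf (bddBelow_SqSet hℓ a) (hne b hb.2) ?_
    rintro x ⟨H, h1, h2, h3, h4, h5⟩
    exact ⟨H, h1, h2, h3, hab.trans h4, h5⟩
  have hfinSub : Finite G.Subgraph := by
    refine Finite.of_injective (fun H : G.Subgraph => (H.verts, H.Adj)) ?_
    intro H K h
    rw [Prod.mk.injEq] at h
    exact SimpleGraph.Subgraph.ext h.1 h.2
  have hfin : (steinerCost G ℓ w r '' Set.Icc (0:ℝ) (∑ v : V, (w v : ℝ))).Finite := by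
    have hT : (Set.range fun H : G.Subgraph =>
        ∑ e ∈ H.edgeSet.toFinite.toFinset, ℓ e).Finite := Set.finite_range _
    refine hT.subset ?_
    rintro x ⟨q, hq, rfl⟩
    have hsub : SqSet G ℓ w r q ⊆ Set.range (fun H : G.Subgraph =>
        ∑ e ∈ H.edgeSet.toFinite.toFinset, ℓ e) := by
      rintro y ⟨H, -, -, -, -, rfl⟩
      exact ⟨H, rfl⟩
    rw [steinerCost_eq]
    exact hsub ((hne q hq.2).csInf_mem (hT.subset hsub))
  refine ⟨hnonneg, hmono, hfin, ?_⟩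
  have hWle : ∀ i : ℕ, i ≤ σ.length → Wg w r σ i ≤ ∑ v : V, (w v : ℝ) :=
    fun i hi => hWlast ▸ Wg_mono hi
  have hint : ∀ a b : ℝ, 0 ≤ a → a ≤ b → b ≤ ∑ v : V, (w v : ℝ) →
      IntervalIntegrable (steinerCost G ℓ w r) MeasureTheory.volume a b := by
    intro a b h0 hab hbW
    exact (hmono.mono
      (by rw [Set.uIcc_of_le hab]; exact Set.Icc_subset_Icc h0 hbW)).intervalIntegrable
  have hkey : ∀ i : ℕ, i ≤ σ.length → ∀ q : ℝ, q ≤ Wg w r σ i →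
      steinerCost G ℓ w r q ≤ Lcost ℓ r σ i := fun i hi q hq => steinerCost_le hσ hℓ hi hq
  have hInd : ∀ i : ℕ, i ≤ σ.length →
      (∫ q in (0:ℝ)..(Wg w r σ i), steinerCost G ℓ w r q) ≤
        ∑ j ∈ Finset.range i, Lcost ℓ r σ (j + 1) * (Wg w r σ (j + 1) - Wg w r σ j) := by
    intro i
    induction i with
    | zero =>
      intro _
      rw [Finset.range_zero, Finset.sum_empty]
      have hb := intervalIntegral.integral_mono_on (g := fun _ : ℝ => (0:ℝ)) (Wg_nonneg 0)
        (hint 0 (Wg w r σ 0) le_rfl (Wg_nonneg 0) (hWle 0 (Nat.zero_le _)))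
        intervalIntegrable_const
        (fun x hx => by
          have h := hkey 0 (Nat.zero_le _) x hx.2
          rw [Lcost, Finset.range_zero, Finset.sum_empty] at h
          exact h)
      simpa using hb
    | succ i ih =>
      intro hi1
      have him : i ≤ σ.length := by omega
      have hmidint := hint (Wg w r σ i) (Wg w r σ (i + 1)) (Wg_nonneg i)
        (Wg_mono (Nat.le_succ i)) (hWle (i + 1) hi1)
      have hadd := intervalIntegral.integral_add_adjacent_intervals
        (hint 0 (Wg w r σ i) le_rfl (Wg_nonneg i) (hWle i him)) hmidint
      have hmid : (∫ q in (Wg w r σ i)..(Wg w r σ (i + 1)), steinerCost G ℓ w r q) ≤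
          (Wg w r σ (i + 1) - Wg w r σ i) * Lcost ℓ r σ (i + 1) := by
        have hb := intervalIntegral.integral_mono_on (g := fun _ : ℝ => Lcost ℓ r σ (i + 1))
          (Wg_mono (Nat.le_succ i)) hmidint intervalIntegrable_const
          (fun x hx => hkey (i + 1) hi1 x hx.2)
        rwa [intervalIntegral.integral_const, smul_eq_mul] at hb
      rw [Finset.sum_range_succ, ← hadd]
      have hih := ih him
      have hcomm : Lcost ℓ r σ (i + 1) * (Wg w r σ (i + 1) - Wg w r σ i) =
          (Wg w r σ (i + 1) - Wg w r σ i) * Lcost ℓ r σ (i + 1) := mul_comm _ _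
      linarith [hih, hmid]
  have hvLsum : ∑ v : V, (w v : ℝ) * latency r ℓ σ v =
      ∑ i ∈ Finset.range σ.length,
        ℓ (σ.getD i s(r, r)) * ((∑ v : V, (w v : ℝ)) - Wg w r σ i) := by
    rw [Finset.sum_congr rfl fun v _ => wlatency hvisit v, Finset.sum_comm]
    refine Finset.sum_congr rfl fun i _ => ?_
    rw [← Finset.mul_sum]
    congr 1
    have h2 : (explored r σ i).toFinite.toFinset =
        Finset.univ.filter (fun v => v ∈ explored r σ i) := by
      ext x
      simp only [Set.Finite.mem_toFinset, Finset.mem_filter, Finset.mem_univ, true_and]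
    have h1 : Wg w r σ i = ∑ v : V, (if v ∈ explored r σ i then (w v : ℝ) else 0) := by
      rw [Wg, h2, Finset.sum_filter]
    rw [h1, ← Finset.sum_sub_distrib]
    refine Finset.sum_congr rfl fun x _ => ?_
    by_cases hx : x ∈ explored r σ i <;> simp [hx]
  calc (∫ q in (0:ℝ)..(∑ v : V, (w v : ℝ)), steinerCost G ℓ w r q)
      = ∫ q in (0:ℝ)..(Wg w r σ σ.length), steinerCost G ℓ w r q := by rw [hWlast]
    _ ≤ ∑ j ∈ Finset.range σ.length,
          Lcost ℓ r σ (j + 1) * (Wg w r σ (j + 1) - Wg w r σ j) := hInd σ.length le_rfl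
    _ = ∑ i ∈ Finset.range σ.length,
          ℓ (σ.getD i s(r, r)) * (Wg w r σ σ.length - Wg w r σ i) :=
        abel_sum (fun j => ℓ (σ.getD j s(r, r))) (Wg w r σ) σ.length
    _ = ∑ i ∈ Finset.range σ.length,
          ℓ (σ.getD i s(r, r)) * ((∑ v : V, (w v : ℝ)) - Wg w r σ i) := by rw [hWlast]
    _ = ∑ v : V, (w v : ℝ) * latency r ℓ σ v := hvLsum.symm

end
end
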